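/- Let T > 0 be a real number, let n ≥ 1 be an integer, and let S be a finite set with |S| ≤ n together with positive real numbers p_j for j ∈ S such that ∑_{j∈S} p_j ≤ T. Then there exists an injective map ϕ : S → {1,…,n} such that p_j ≤ T/ϕ(j) for every j ∈ S. Equivalently, the bipartite graph with parts S and {1,…,n}, in which j ∈ S is adjacent to slot ℓ ∈ {1,…,n} if and only if p_j ≤ T/ℓ, has a matching saturating S. -/
import Mathlib


open Finset

/-- Hall-type matching lemma: if `|S| ≤ n` and the positive numbers `p j` sum to at most
`T > 0`, then the jobs of `S` can be injectively assigned to slots `1, …, n` so that the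
job in slot `ℓ` has `p j ≤ T/ℓ`. -/
theorem jobs_match_to_slots (T : ℝ) (hT : 0 < T) (n : ℕ) (hn : 1 ≤ n)
    {S : Type} [Fintype S] (hS : Fintype.card S ≤ n)
    (p : S → ℝ) (hp : ∀ j, 0 < p j) (hsum : ∑ j, p j ≤ T) :
    ∃ φ : S → ℕ, Function.Injective φ ∧
      ∀ j, 1 ≤ φ j ∧ φ j ≤ n ∧ p j ≤ T / (φ j : ℝ) := by
  classical
  set k := Fintype.card S with hk
  let e : S ≃ Fin k := Fintype.equivFin S
  set f : Fin k → ℝ := fun i => -p (e.symm i) with hf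
  set σ := Tuple.sort f with hσ
  have hmono : Monotone (f ∘ σ) := Tuple.monotone_sort f
  set g : Fin k → ℝ := fun i => p (e.symm (σ i)) with hg
  have hanti : ∀ i m : Fin k, m ≤ i → g i ≤ g m := by
    intro i m h
    have := hmono h
    simp only [Function.comp, hf] at this
    simpa [g] using neg_le_neg_iff.mp this
  have hgsum : ∑ i, g i = ∑ j, p j := by
    apply Fintype.sum_bijective (fun i => e.symm (σ i))
    · exact (σ.trans e.symm).bijective
    · intro i; rfl
  refine ⟨fun j => (σ.symm (e j)).val + 1, ?_, ?_⟩
  · intro a b hab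
    have : σ.symm (e a) = σ.symm (e b) := Fin.ext (Nat.succ_injective hab)
    exact e.injective (σ.symm.injective this)
  · intro j
    set i := σ.symm (e j) with hi
    have hgi : g i = p j := by simp [g, i]
    refine ⟨Nat.le_add_left 1 _, ?_, ?_⟩
    · show i.val + 1 ≤ n
      have : i.val < k := i.isLt
      omega
    · -- key bound : (i+1) * g i ≤ T
      have hpos : ∀ m : Fin k, 0 ≤ g m := fun m => (hp _).le
      have h1 : ((i.val : ℝ) + 1) * g i ≤ ∑ m ∈ Finset.Iic i, g m := by
        have hcard : (Finset.Iic i).card = i.val + 1 := by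
          exact Fin.card_Iic i
        calc ((i.val : ℝ) + 1) * g i = ∑ _m ∈ Finset.Iic i, g i := by
              rw [Finset.sum_const, hcard]; push_cast; ring
          _ ≤ ∑ m ∈ Finset.Iic i, g m :=
              Finset.sum_le_sum fun m hm => hanti i m (Finset.mem_Iic.mp hm)
      have h2 : ∑ m ∈ Finset.Iic i, g m ≤ ∑ m, g m :=
        Finset.sum_le_sum_of_subset_of_nonneg (Finset.subset_univ _)
          (fun m _ _ => hpos m)
      have h3 : ((i.val : ℝ) + 1) * g i ≤ T := le_trans h1 (le_trans h2 (hgsum ▸ hsum))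
      have hfin : p j ≤ T / ((i.val : ℝ) + 1) := by
        rw [← hgi, le_div_iff₀ (by positivity)]
        linarith [h3]
      show p j ≤ T / ((i.val + 1 : ℕ) : ℝ)
      push_cast
      exact hfin
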